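/- If u : E → E is a nilpotent endomorphism of a finite dimensional vector space E over a field k of characteristic zero, then log(exp(u)) = u, where exp(u) = Σ_{l≥0} u^l/l! and log(v) = Σ_{l≥1} (-1)^{l+1}(v - Id)^l/l. -/
import Mathlib

open Polynomial Finset

noncomputable section LogExpAux

variable (k : Type*) [Field k]

/-- Truncated exponential polynomial `Σ_{l<N} X^l / l!`. -/
def expPoly (N : ℕ) : k[X] := ∑ l ∈ range N, C ((l.factorial : k)⁻¹) * X ^ l

/-- Truncated logarithm polynomial `Σ_{1≤l<M} (-1)^{l+1} X^l / l`. -/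
def logPoly (M : ℕ) : k[X] :=
  ∑ l ∈ range M, C (if l = 0 then (0 : k) else (-1 : k) ^ (l + 1) / (l : k)) * X ^ l

lemma C_nat_add_one (l : ℕ) : C ((l:k)+1) = ((l : k[X]) + 1) := by
  rw [map_add, C_eq_natCast, C_1]

lemma expPoly_coeff_zero (N : ℕ) : (expPoly k (N + 1)).coeff 0 = 1 := by
  simp [expPoly, coeff_X_pow, Finset.sum_range_succ']

lemma logPoly_coeff_zero (M : ℕ) : (logPoly k M).coeff 0 = 0 := by
  rcases M with _ | M
  · simp [logPoly]
  · simp [logPoly, coeff_X_pow, Finset.sum_range_succ']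

lemma expPoly_succ (N : ℕ) :
    expPoly k (N + 1) = expPoly k N + C ((N.factorial : k)⁻¹) * X ^ N := by
  simp [expPoly, Finset.sum_range_succ]

variable [CharZero k]

lemma fact_key (l : ℕ) : (((l+1).factorial : k))⁻¹ * ((l:k)+1) = ((l.factorial : k))⁻¹ := by
  have h1 : ((l:k) + 1) ≠ 0 := Nat.cast_add_one_ne_zero l
  rw [Nat.factorial_succ, Nat.cast_mul, mul_inv, Nat.cast_add, Nat.cast_one,
    mul_comm ((((l:k))+1)⁻¹), mul_assoc, inv_mul_cancel₀ h1, mul_one]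

lemma derivative_expPoly (N : ℕ) :
    derivative (expPoly k (N + 1)) = expPoly k N := by
  rw [expPoly, Finset.sum_range_succ']
  rw [derivative_add, derivative_sum]
  simp only [derivative_C_mul_X_pow, Nat.add_sub_cancel]
  rw [expPoly]
  norm_num
  refine Finset.sum_congr rfl fun l _ => ?_
  rw [← C_nat_add_one, ← map_mul, fact_key]

lemma derivative_logPoly (M : ℕ) :
    derivative (logPoly k (M + 1)) = ∑ j ∈ range M, (-X : k[X]) ^ j := by
  rw [logPoly, Finset.sum_range_succ']
  rw [derivative_add, derivative_sum]
  simp only [derivative_C_mul_X_pow, Nat.add_sub_cancel]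
  norm_num
  refine Finset.sum_congr rfl fun l _ => ?_
  have h1 : ((l:k) + 1) ≠ 0 := Nat.cast_add_one_ne_zero l
  have key : (-1 : k) ^ (l + 1 + 1) / ((l:k)+1) * ((l:k)+1) = (-1:k) ^ l := by
    rw [div_mul_cancel₀ _ h1, pow_succ, pow_succ]
    ring
  rw [← C_nat_add_one, ← map_mul, key, ← neg_one_mul (X : k[X]), mul_pow]
  simp

lemma X_pow_dvd_logPoly_comp_expPoly (n N M : ℕ) (hn : 1 ≤ n) (hN : n ≤ N) (hM : n ≤ M) :
    X ^ n ∣ (logPoly k M).comp (expPoly k N - 1) - X := by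
  obtain ⟨N', rfl⟩ : ∃ N', N = N' + 1 := ⟨N - 1, by omega⟩
  obtain ⟨M', rfl⟩ : ∃ M', M = M' + 1 := ⟨M - 1, by omega⟩
  set P : k[X] := expPoly k (N' + 1) with hPdef
  set Q : k[X] := logPoly k (M' + 1) with hQdef
  set f : k[X] := Q.comp (P - 1) - X with hfdef
  -- X divides P - 1
  have hP0 : (P - 1).coeff 0 = 0 := by
    simp [hPdef, expPoly_coeff_zero]
  have hXP1 : X ∣ (1 - P : k[X]) := by
    have h : (1 - P : k[X]) = -(P - 1) := by ring
    rw [h]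
    exact dvd_neg.mpr (X_dvd_iff.mpr hP0)
  -- geometric identity composed at P - 1
  have hD : derivative Q = ∑ j ∈ range M', (-X : k[X]) ^ j := derivative_logPoly k M'
  have geom : (∑ j ∈ range M', (-X : k[X]) ^ j) * ((-X) - 1) = (-X) ^ M' - 1 :=
    geom_sum_mul _ _
  have geomC : (derivative Q).comp (P - 1) * (-P) = (1 - P) ^ M' - 1 := by
    have := congrArg (fun p : k[X] => p.comp (P - 1)) geom
    simp only [mul_comp, sub_comp, neg_comp, X_comp, pow_comp, one_comp] at this
    rw [hD]
    convert this using 2 <;> ring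
  have geomC' : P * ((derivative Q).comp (P - 1)) = 1 - (1 - P) ^ M' := by
    have := geomC
    have h2 : -((derivative Q).comp (P - 1) * P) = (1 - P) ^ M' - 1 := by
      rw [← this]; ring
    linear_combination -h2
  -- derivative of f
  have hdf : derivative f = derivative P * ((derivative Q).comp (P - 1)) - 1 := by
    rw [hfdef, derivative_sub, derivative_X, derivative_comp, derivative_sub, derivative_one,
      sub_zero]
  have hPf : P * derivative f = -(C ((N'.factorial : k)⁻¹) * X ^ N')
      - derivative P * (1 - P) ^ M' := by
    rw [hdf, mul_sub, mul_one, ← mul_assoc, mul_comm P (derivative P), mul_assoc, geomC']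
    rw [hPdef, derivative_expPoly, expPoly_succ]
    ring
  -- X^(n-1) divides P * derivative f
  have hdvd : X ^ (n - 1) ∣ P * derivative f := by
    rw [hPf]
    apply dvd_sub
    · apply dvd_neg.mpr
      exact Dvd.dvd.mul_left (pow_dvd_pow X (by omega)) _
    · apply Dvd.dvd.mul_left
      exact dvd_trans (pow_dvd_pow X (by omega)) (pow_dvd_pow_of_dvd hXP1 M')
  -- X does not divide P
  have hXP : ¬ (X : k[X]) ∣ P := by
    rw [X_dvd_iff, hPdef, expPoly_coeff_zero]
    exact one_ne_zero
  have hf' : X ^ (n - 1) ∣ derivative f := by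
    refine (prime_X (R := k)).pow_dvd_of_dvd_mul_left _ hXP ?_
    exact hdvd
  -- constant term of f is zero
  have hf0 : f.coeff 0 = 0 := by
    rw [hfdef, coeff_sub, coeff_zero_eq_eval_zero, eval_comp]
    have h1 : (P - 1).eval 0 = 0 := by
      rw [← coeff_zero_eq_eval_zero]; exact hP0
    rw [h1, ← coeff_zero_eq_eval_zero, logPoly_coeff_zero]
    simp
  -- conclude
  rw [X_pow_dvd_iff]
  intro d hd
  rcases d with _ | d
  · exact hf0
  · have h1 := (X_pow_dvd_iff.mp hf') d (by omega)
    rw [coeff_derivative] at h1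
    rcases mul_eq_zero.mp h1 with h | h
    · exact h
    · exact absurd h (Nat.cast_add_one_ne_zero d)

end LogExpAux

/-- Truncated exponential `Σ_{l<N} u^l / l!` of an endomorphism. -/
noncomputable def truncExp {k E : Type*} [Field k] [AddCommGroup E] [Module k E]
    (u : Module.End k E) (N : ℕ) : Module.End k E :=
  ∑ l ∈ Finset.range N, ((l.factorial : k)⁻¹) • u ^ l

/-- Truncated logarithm `Σ_{1 ≤ l < M} (-1)^{l+1} (v - Id)^l / l` of an endomorphism. -/
noncomputable def truncLog {k E : Type*} [Field k] [AddCommGroup E] [Module k E]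
    (v : Module.End k E) (M : ℕ) : Module.End k E :=
  ∑ l ∈ Finset.range M, (if l = 0 then (0 : k) else (-1 : k) ^ (l + 1) / (l : k)) • (v - 1) ^ l

/-- If `u : E → E` is a nilpotent endomorphism of a finite dimensional vector space `E` over a
field `k` of characteristic zero, then `log (exp u) = u`, where the defining series of `exp` and
`log` are finite sums (any truncation beyond the nilpotency index gives the full series, since
`u` and `exp u - Id` are nilpotent with `u ^ n = 0` and `(exp u - Id) ^ n = 0`). -/
theorem log_exp_of_nilpotent {k E : Type*} [Field k] [CharZero k]
    [AddCommGroup E] [Module k E] [FiniteDimensional k E]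
    (u : Module.End k E) (n : ℕ) (hu : u ^ n = 0)
    (N M : ℕ) (hN : n ≤ N) (hM : n ≤ M) :
    truncLog (truncExp u N) M = u := by
  rcases Nat.eq_zero_or_pos n with rfl | hn
  · have h1 : (1 : Module.End k E) = 0 := by simpa using hu
    have hall : ∀ a : Module.End k E, a = 0 := fun a => by
      rw [← mul_one a, h1, mul_zero]
    rw [hall (truncLog (truncExp u N) M), hall u]
  · obtain ⟨S, hS⟩ := X_pow_dvd_logPoly_comp_expPoly k n N M hn hN hM
    have hE : truncExp u N = Polynomial.aeval u (expPoly k N) := by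
      rw [truncExp, expPoly, map_sum]
      exact Finset.sum_congr rfl fun l _ => by
        simp [Algebra.smul_def]
    have hL : truncLog (truncExp u N) M
        = Polynomial.aeval u ((logPoly k M).comp (expPoly k N - 1)) := by
      rw [Polynomial.aeval_comp, map_sub, map_one, ← hE, truncLog, logPoly, map_sum]
      exact Finset.sum_congr rfl fun l _ => by
        simp [Algebra.smul_def]
    have hcomp : (logPoly k M).comp (expPoly k N - 1)
        = Polynomial.X + Polynomial.X ^ n * S := by
      rw [← hS]; ring
    rw [hL, hcomp, map_add, map_mul, map_pow, Polynomial.aeval_X, hu, zero_mul, add_zero]
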